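/- In the PRST scheme, if blocking descendants occurs below node i, then every ancestor's pass-down proportion weakly decreases: Ω_j' ≤ Ω_j for every ancestor j of i on the path from s to i. -/
import Mathlib


/-- PRST: after blocking Δ descendants below node i, every ancestor's pass-down proportion
weakly decreases: Ω_j' ≤ Ω_j along the path from s to i. -/
theorem prst_blocking_decreases_Omega {V : Type*} (s : V) (p : V → V)
    (c c' : V → ℕ) (Ω Ω' : V → ℝ) (α : ℝ) (hα0 : 0 < α) (hα1 : α < 1)
    (hroot : p s = s)
    (hΩs : Ω s = 1) (hΩ's : Ω' s = 1)
    (hcard : ∀ j, j ≠ s → c j + 1 ≤ c (p j))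
    (hcard' : ∀ j, j ≠ s → c' j + 1 ≤ c' (p j))
    (hΩrec : ∀ j, j ≠ s → Ω j =
      Ω (p j) * (((c j : ℝ) + 1) / (c (p j) : ℝ) -
        1 / ((c (p j) : ℝ) - (c j : ℝ))) * (1 - α))
    (hΩ'rec : ∀ j, j ≠ s → Ω' j =
      Ω' (p j) * (((c' j : ℝ) + 1) / (c' (p j) : ℝ) -
        1 / ((c' (p j) : ℝ) - (c' j : ℝ))) * (1 - α))
    (i : V) (Δ m : ℕ)
    (hpath : p^[m] i = s)
    (hne : ∀ k, k < m → p^[k] i ≠ s)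
    (hdrop : ∀ k, k ≤ m → c' (p^[k] i) + Δ = c (p^[k] i)) :
    ∀ k, 1 ≤ k → k ≤ m → Ω' (p^[k] i) ≤ Ω (p^[k] i) := by
  have key : ∀ d, d ≤ m → 0 ≤ Ω' (p^[m-d] i) ∧ Ω' (p^[m-d] i) ≤ Ω (p^[m-d] i) := by
    intro d
    induction d with
    | zero =>
      intro _
      simp only [Nat.sub_zero, hpath, hΩs, hΩ's]
      exact ⟨zero_le_one, le_refl 1⟩
    | succ d ih =>
      intro hd
      have hdm : d ≤ m := by omega
      obtain ⟨h0, h1⟩ := ih hdm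
      set k := m - (d + 1) with hkdef
      have hk : k < m := by omega
      have hk1 : k + 1 = m - d := by omega
      have hj : p^[k] i ≠ s := hne k hk
      have hpj : p (p^[k] i) = p^[k+1] i := (Function.iterate_succ_apply' p k i).symm
      rw [hk1] at hpj
      -- casts and abbreviations
      have hcd' : c' (p^[k] i) + 1 ≤ c' (p (p^[k] i)) := hcard' _ hj
      have hd1 : c' (p^[k] i) + Δ = c (p^[k] i) := hdrop k (le_of_lt hk)
      have hd2 : c' (p (p^[k] i)) + Δ = c (p (p^[k] i)) := by
        rw [hpj]; rw [← hk1]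
        exact hdrop (k+1) (by omega)
      set a : ℝ := (c' (p^[k] i) : ℝ) with ha
      set P : ℝ := (c' (p (p^[k] i)) : ℝ) with hP
      set D : ℝ := (Δ : ℝ) with hD
      have haP : a + 1 ≤ P := by rw [ha, hP]; exact_mod_cast hcd'
      have ha0 : 0 ≤ a := by rw [ha]; positivity
      have hD0 : 0 ≤ D := by rw [hD]; positivity
      have hP0 : 0 < P := by linarith
      have hPa : 0 < P - a := by linarith
      have hcC : (c (p^[k] i) : ℝ) = a + D := by
        rw [ha, hD, ← hd1]; push_cast; ring
      have hcP : (c (p (p^[k] i)) : ℝ) = P + D := by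
        rw [hP, hD, ← hd2]; push_cast; ring
      -- factor bounds
      have hf0 : 0 ≤ (a + 1) / P - 1 / (P - a) := by
        rw [sub_nonneg, div_le_div_iff₀ hPa hP0]
        nlinarith
      have hff : (a + 1) / P - 1 / (P - a) ≤
          ((a + D) + 1) / (P + D) - 1 / ((P + D) - (a + D)) := by
        have h2 : (a + 1) / P ≤ ((a + D) + 1) / (P + D) := by
          rw [div_le_div_iff₀ hP0 (by linarith)]
          nlinarith
        have h3 : (P + D) - (a + D) = P - a := by ring
        rw [h3]
        linarith
      have hrec' := hΩ'rec _ hj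
      have hrec := hΩrec _ hj
      rw [← hpj] at h0 h1
      rw [hrec', hrec, hcC, hcP]
      constructor
      · apply mul_nonneg (mul_nonneg _ _) (by linarith)
        · exact h0
        · rw [← ha, ← hP]; exact hf0
      · apply mul_le_mul_of_nonneg_right _ (by linarith : (0:ℝ) ≤ 1 - α)
        rw [← ha, ← hP]
        apply mul_le_mul h1 hff hf0 (le_trans h0 h1)
  intro k hk1 hkm
  have := (key (m - k) (by omega)).2
  have hmk : m - (m - k) = k := by omega
  rwa [hmk] at this
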